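/- Let q be a prime power and a ∈ F_{q^2}^*. Then for every h ∈ F_q, 0 ≤ 𝒩(h, c_{q-1}(a)) ≤ 2, and there exists at least one u ∈ F_q such that 𝒩(u, c_{q-1}(a)) = 2. Moreover, if q is even then 𝒩(0, c_{q-1}(a)) = 1. -/

import Mathlib

open Polynomial

/-- The codeword `c_N(a) = (Tr(a γ^(N k)))_{k=0}^{n-1}`, a vector of length `n` over `F`. -/
noncomputable def cwordN {F E : Type} [Field F] [Field E] [Algebra F E]
    (γ : Eˣ) (N n : ℕ) (a : E) : Fin n → F :=
  fun k => Algebra.trace F E (a * (γ : E) ^ (N * (k : ℕ)))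

/-- `𝒩(t, v)`: the number of occurrences of the symbol `t` in the vector `v`. -/
def Ncount {F : Type} [DecidableEq F] {n : ℕ} (t : F) (v : Fin n → F) : ℕ :=
  (Finset.univ.filter fun k => v k = t).card


lemma trace_formula {q : ℕ} {F E : Type} [Field F] [Fintype F] [Field E] [Fintype E]
    [Algebra F E] (hF : Fintype.card F = q) (hE : Fintype.card E = q ^ 2) (x : E) :
    algebraMap F E (Algebra.trace F E x) = x + x ^ q := by
  classical
  have hq1 : 1 < q := hF ▸ Fintype.one_lt_card
  obtain ⟨p, hp⟩ := CharP.exists F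
  haveI : CharP F p := hp
  haveI : CharP E p := charP_of_injective_algebraMap' F p
  obtain ⟨n, hpn, hq⟩ := FiniteField.card F p
  rw [hF] at hq
  haveI : Fact p.Prime := ⟨hpn⟩
  haveI : ExpChar E p := ExpChar.prime hpn
  have hφ₀ : ∀ y : E, iterateFrobenius E p n y = y ^ q := fun y => by
    rw [iterateFrobenius_def, ← hq]
  let φa : E →ₐ[F] E :=
    { toRingHom := iterateFrobenius E p n
      commutes' := fun c => by
        show iterateFrobenius E p n (algebraMap F E c) = algebraMap F E c
        rw [hφ₀, ← map_pow]
        congr 1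
        rw [← hF]
        exact FiniteField.pow_card c }
  have hbij : Function.Bijective φa :=
    (Finite.injective_iff_bijective).1 (φa.toRingHom.injective)
  let φ : E ≃ₐ[F] E := AlgEquiv.ofBijective φa hbij
  have hφ : ∀ y : E, φ y = y ^ q := hφ₀
  -- there is an element not fixed by x ↦ x^q
  have hex : ∃ x₀ : E, x₀ ^ q ≠ x₀ := by
    by_contra hcon
    push_neg at hcon
    have hsub : (Finset.univ : Finset E) ⊆ (X ^ q - X : E[X]).roots.toFinset := by
      intro y _
      rw [Multiset.mem_toFinset, mem_roots (FiniteField.X_pow_card_sub_X_ne_zero E hq1)]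
      simp [IsRoot, hcon y]
    have hcard : q ^ 2 ≤ q := by
      calc q ^ 2 = Fintype.card E := hE.symm
        _ = (Finset.univ : Finset E).card := (Finset.card_univ).symm
        _ ≤ ((X ^ q - X : E[X]).roots.toFinset).card := Finset.card_le_card hsub
        _ ≤ Multiset.card (X ^ q - X : E[X]).roots := Multiset.toFinset_card_le _
        _ ≤ (X ^ q - X : E[X]).natDegree := card_roots' _
        _ = q := FiniteField.X_pow_card_sub_X_natDegree_eq E hq1
    nlinarith
  obtain ⟨x₀, hx₀⟩ := hex
  have hne : (AlgEquiv.refl : E ≃ₐ[F] E) ≠ φ := by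
    intro hEq
    apply hx₀
    rw [← hφ x₀, ← hEq]
    rfl
  have hfinrank : Module.finrank F E = 2 := by
    have hcardeq := Module.card_eq_pow_finrank (K := F) (V := E)
    rw [hF, hE] at hcardeq
    exact (Nat.pow_right_injective hq1 hcardeq.symm)
  have hcard2 : Fintype.card (E ≃ₐ[F] E) = 2 := by
    rw [← Nat.card_eq_fintype_card, IsGalois.card_aut_eq_finrank, hfinrank]
  have huniv : (Finset.univ : Finset (E ≃ₐ[F] E)) = {AlgEquiv.refl, φ} := by
    symm
    apply Finset.eq_univ_of_card
    rw [Finset.card_pair hne, hcard2]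
  rw [trace_eq_sum_automorphisms, huniv, Finset.sum_pair hne, hφ]
  rfl

theorem stmt_10 (q : ℕ) (F E : Type) [Field F] [Fintype F] [DecidableEq F]
    [Field E] [Fintype E] [Algebra F E]
    (hF : Fintype.card F = q) (hE : Fintype.card E = q ^ 2)
    (γ : Eˣ) (hγ : ∀ x : Eˣ, x ∈ Subgroup.zpowers γ)
    (a : E) (ha : a ≠ 0) :
    (∀ h : F, Ncount h (cwordN γ (q - 1) (q + 1) a) ≤ 2) ∧
    (∃ u : F, Ncount u (cwordN γ (q - 1) (q + 1) a) = 2) ∧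
    (Even q → Ncount (0 : F) (cwordN γ (q - 1) (q + 1) a) = 1) := by
  classical
  have hq1 : 1 < q := hF ▸ Fintype.one_lt_card
  have hcardu : Fintype.card Eˣ = q ^ 2 - 1 := by rw [Fintype.card_units, hE]
  have horder : orderOf γ = q ^ 2 - 1 := by
    rw [orderOf_eq_card_of_forall_mem_zpowers hγ, Nat.card_eq_fintype_card, hcardu]
  have hqq : (q - 1) * (q + 1) = q ^ 2 - 1 := by
    obtain ⟨m, rfl⟩ : ∃ m, q = m + 2 := ⟨q - 2, by omega⟩
    show (m + 1) * (m + 3) = (m + 2) ^ 2 - 1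
    have h1 : (m + 2) ^ 2 = m * m + 4 * m + 4 := by ring
    have h2 : (m + 1) * (m + 3) = m * m + 4 * m + 3 := by ring
    omega
  set β : Eˣ := γ ^ (q - 1) with hβdef
  have horderβ : orderOf β = q + 1 := by
    rw [hβdef, orderOf_pow, horder, Nat.gcd_eq_right ⟨q + 1, hqq.symm⟩]
    rw [← hqq, Nat.mul_div_cancel_left _ (by omega : 0 < q - 1)]
  have hβ1 : β ^ (q + 1) = 1 := by
    rw [hβdef, ← pow_mul, hqq, ← hcardu]
    exact pow_card_eq_one
  set z : Fin (q + 1) → E := fun k => ((β : E)) ^ (k : ℕ) with hzdef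
  have hinjβ : Function.Injective fun k : Fin (q + 1) => β ^ (k : ℕ) := by
    intro i j hij
    exact Fin.ext (pow_injOn_Iio_orderOf (by rw [horderβ]; exact i.isLt)
      (by rw [horderβ]; exact j.isLt) hij)
  have hinjz : Function.Injective z := by
    intro i j hij
    apply hinjβ
    apply Units.ext
    simpa [Units.val_pow_eq_pow_val] using hij
  have hz0 : ∀ k, z k ≠ 0 := fun k => by
    simp [hzdef, ← Units.val_pow_eq_pow_val]
  have hz1 : ∀ k, z k ^ (q + 1) = 1 := fun k => by
    have step : z k ^ (q + 1) = ((β ^ (q + 1) : Eˣ) : E) ^ (k : ℕ) := by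
      rw [Units.val_pow_eq_pow_val]
      show ((β : E) ^ (k : ℕ)) ^ (q + 1) = ((β : E) ^ (q + 1)) ^ (k : ℕ)
      rw [← pow_mul, ← pow_mul, mul_comm]
    rw [step, hβ1, Units.val_one, one_pow]
  have hzq : ∀ k, z k ^ q * z k = 1 := fun k => by
    rw [← pow_succ]; exact hz1 k
  have hcw : ∀ k : Fin (q + 1), cwordN γ (q - 1) (q + 1) a k = Algebra.trace F E (a * z k) := by
    intro k
    simp only [cwordN, hzdef, hβdef, Units.val_pow_eq_pow_val, ← pow_mul]
  have hcond : ∀ (k : Fin (q + 1)) (h : F),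
      cwordN γ (q - 1) (q + 1) a k = h ↔ a * z k + a ^ q * z k ^ q = algebraMap F E h := by
    intro k h
    rw [hcw k, ← (algebraMap F E).injective.eq_iff, trace_formula hF hE, mul_pow]
  -- part 1
  have hbound : ∀ h : F, Ncount h (cwordN γ (q - 1) (q + 1) a) ≤ 2 := by
    intro h
    set P : E[X] := C a * X ^ 2 + C (-(algebraMap F E h)) * X + C (a ^ q) with hPdef
    have hP2 : P.natDegree = 2 := natDegree_quadratic ha
    have hPne : P ≠ 0 := fun h0 => by simp [h0] at hP2
    have hroot : ∀ k ∈ Finset.univ.filter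
        (fun k => cwordN γ (q - 1) (q + 1) a k = h), z k ∈ P.roots.toFinset := by
      intro k hk
      rw [Finset.mem_filter] at hk
      have h1 := (hcond k h).1 hk.2
      rw [Multiset.mem_toFinset, mem_roots hPne, IsRoot.def, hPdef]
      simp only [eval_add, eval_mul, eval_pow, eval_C, eval_X, eval_neg]
      have h2 : (a * z k + a ^ q * z k ^ q) * z k = algebraMap F E h * z k := by rw [h1]
      have h3 := hzq k
      linear_combination h2 - a ^ q * h3
    calc Ncount h (cwordN γ (q - 1) (q + 1) a)
        ≤ P.roots.toFinset.card :=
          Finset.card_le_card_of_injOn z hroot (fun i _ j _ hij => hinjz hij)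
      _ ≤ Multiset.card P.roots := Multiset.toFinset_card_le _
      _ ≤ P.natDegree := card_roots' _
      _ = 2 := hP2
  refine ⟨hbound, ?_, ?_⟩
  · -- part 2 : pigeonhole
    obtain ⟨u, _, hu⟩ := Finset.exists_lt_card_fiber_of_mul_lt_card_of_maps_to
      (s := (Finset.univ : Finset (Fin (q + 1)))) (t := (Finset.univ : Finset F))
      (f := cwordN γ (q - 1) (q + 1) a) (n := 1)
      (fun x _ => Finset.mem_univ _)
      (by simp only [Finset.card_univ, Fintype.card_fin, hF, mul_one]; omega)
    exact ⟨u, le_antisymm (hbound u) hu⟩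
  · -- part 3
    intro hqe
    obtain ⟨p, hp⟩ := CharP.exists F
    haveI : CharP F p := hp
    haveI hpE : CharP E p := charP_of_injective_algebraMap' F p
    obtain ⟨n, hpn, hqpn⟩ := FiniteField.card F p
    rw [hF] at hqpn
    have hp2 : p = 2 := by
      have h2 : (2 : ℕ) ∣ p ^ (n : ℕ) := hqpn ▸ hqe.two_dvd
      exact ((Nat.prime_dvd_prime_iff_eq Nat.prime_two hpn).1
        (Nat.Prime.dvd_of_dvd_pow Nat.prime_two h2)).symm
    haveI hE2 : CharP E 2 := by rwa [hp2] at hpE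
    have h2z : (2 : E) = 0 := CharTwo.two_eq_zero
    -- square root of c = a^(q-1)
    set c : E := a ^ (q - 1) with hcdef
    have hac : a * c = a ^ q := by
      rw [hcdef, ← pow_succ']
      congr 1
      omega
    obtain ⟨w, hw⟩ := FiniteField.isSquare_of_char_two (ringChar.eq E 2) c
    have hw2 : w ^ 2 = c := by rw [sq]; exact hw.symm
    have hcq1 : c ^ (q + 1) = 1 := by
      rw [hcdef, ← pow_mul, hqq]
      have hpow := FiniteField.pow_card_sub_one_eq_one a ha
      rwa [hE] at hpow
    have hwS : w ^ (q + 1) = 1 := by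
      have hsq : (w ^ (q + 1) - 1) ^ 2 = 0 := by
        have h1 : (w ^ (q + 1)) ^ 2 = 1 := by
          rw [← pow_mul, mul_comm, pow_mul, hw2, hcq1]
        linear_combination h1 + (1 - w ^ (q + 1)) * h2z
      have := pow_eq_zero_iff (n := 2) (by norm_num) |>.1 hsq
      exact sub_eq_zero.1 this
    -- image of z is the set of (q+1)-th roots of unity
    have himg : Finset.image z Finset.univ = nthRootsFinset (q + 1) (1 : E) := by
      apply Finset.eq_of_subset_of_card_le
      · intro x hx
        obtain ⟨k, _, rfl⟩ := Finset.mem_image.1 hx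
        exact (mem_nthRootsFinset (by omega) (1 : E)).2 (hz1 k)
      · rw [Finset.card_image_of_injective _ hinjz, Finset.card_univ, Fintype.card_fin]
        calc (nthRootsFinset (q + 1) (1 : E)).card
            ≤ Multiset.card (nthRoots (q + 1) (1 : E)) := by
              rw [nthRootsFinset_def]; exact Multiset.toFinset_card_le _
          _ ≤ q + 1 := card_nthRoots _ _
    have hwmem : w ∈ Finset.image z Finset.univ := by
      rw [himg]
      exact (mem_nthRootsFinset (by omega) (1 : E)).2 hwS
    obtain ⟨k₀, -, hk₀⟩ := Finset.mem_image.1 hwmem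
    have hfilter : (Finset.univ.filter fun k => cwordN γ (q - 1) (q + 1) a k = (0 : F)) = {k₀} := by
      ext k
      simp only [Finset.mem_filter, Finset.mem_univ, true_and, Finset.mem_singleton]
      rw [hcond k 0, map_zero]
      constructor
      · intro hk
        have hsq : z k ^ 2 = c := by
          have h1 : (a * z k + a ^ q * z k ^ q) * z k = 0 := by rw [hk, zero_mul]
          have h3 := hzq k
          apply mul_left_cancel₀ ha
          rw [hac]
          linear_combination h1 - a ^ q * h3 - a ^ q * h2z
        have hzw : z k = w := by
          have hdiff : (z k - w) ^ 2 = 0 := by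
            linear_combination hsq + hw2 + (c - z k * w) * h2z
          have := pow_eq_zero_iff (n := 2) (by norm_num) |>.1 hdiff
          exact sub_eq_zero.1 this
        exact hinjz (by rw [hzw, hk₀])
      · rintro rfl
        have h3 := hzq k
        have hsq2 : z k ^ 2 = c := by rw [sq, hk₀, ← sq, hw2]
        have h1 : (a * z k + a ^ q * z k ^ q) * z k = 0 := by
          linear_combination a * hsq2 + a ^ q * h3 + hac + a ^ q * h2z
        rcases mul_eq_zero.1 h1 with hzero | hzero
        · exact hzero
        · exact absurd hzero (hz0 k)
    show (Finset.univ.filter fun k => cwordN γ (q - 1) (q + 1) a k = (0 : F)).card = 1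
    rw [hfilter, Finset.card_singleton]
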